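/- For m ≥ 3 and s ≥ 2, let G = cr(K_m, s) and J = J(G). Then for all n ≥ 0, d(J^(2n)) = m(s+1)n and d(J^(2n+1)) = m(s+1)n + m + s − 1; consequently, d(J^(n)) = (m+s−1)n + (m−2)(s−1)⌊n/2⌋ for all n, which is not an eventually linear function of n. -/

import Mathlib

/-- The generalized corona `cr(K_m, s)`: the complete graph on `Fin m`
(vertices `Sum.inl i`) with `s` pendant vertices `Sum.inr (i, t)` attached to
each vertex `i` of `K_m`. -/
def coronaK (m s : ℕ) : SimpleGraph (Fin m ⊕ Fin m × Fin s) where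
  Adj u v :=
    match u, v with
    | Sum.inl i, Sum.inl j => i ≠ j
    | Sum.inl i, Sum.inr p => i = p.1
    | Sum.inr p, Sum.inl j => p.1 = j
    | Sum.inr _, Sum.inr _ => False
  symm := by
    constructor
    rintro (i | p) (j | q) h
    · exact h.symm
    · exact h.symm
    · exact h.symm
    · exact h.elim
  loopless := by
    constructor
    rintro (i | p) h
    · exact h rfl
    · exact h

/-- Monomial membership in the `n`-th symbolic power of the cover ideal:
`x^α ∈ J(G)⁽ⁿ⁾ = ⋂_{ij ∈ E(G)} (xᵢ,xⱼ)ⁿ` iff `α i + α j ≥ n` for every edge. -/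
def memSymbCover {V : Type*} (G : SimpleGraph V) (n : ℕ) (α : V → ℕ) : Prop :=
  ∀ i j, G.Adj i j → n ≤ α i + α j

/-- `x^α` is a minimal monomial generator of `J(G)⁽ⁿ⁾`. -/
def isMinGenSymbCover {V : Type*} (G : SimpleGraph V) (n : ℕ) (α : V → ℕ) : Prop :=
  memSymbCover G n α ∧ ∀ β : V → ℕ, β ≤ α → β ≠ α → ¬ memSymbCover G n β

/-- The maximal generating degree `d(J(cr(K_m,s))⁽ⁿ⁾)` equals `D`. -/
def maxGenDegreeIs (m s n D : ℕ) : Prop :=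
  IsGreatest {d : ℕ | ∃ α : (Fin m ⊕ Fin m × Fin s) → ℕ,
      isMinGenSymbCover (coronaK m s) n α ∧ d = ∑ u, α u} D

namespace CoronaAux

/-- the extremal exponent on core vertices -/
def extA (m n : ℕ) (i : Fin m) : ℕ := if i.val = 0 then n / 2 else n - n / 2

/-- the extremal exponent vector -/
def extV (m s n : ℕ) : (Fin m ⊕ Fin m × Fin s) → ℕ
  | Sum.inl i => extA m n i
  | Sum.inr p => n - extA m n p.1

lemma extA_le (m n : ℕ) (i : Fin m) : extA m n i ≤ n := by
  unfold extA; split <;> omega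

lemma mem_extV (m s n : ℕ) : memSymbCover (coronaK m s) n (extV m s n) := by
  rintro (i | p) (j | q) hadj
  · have hij : i ≠ j := hadj
    simp only [extV, extA]
    split_ifs with h1 h2 h3
    · exact absurd (Fin.val_injective (h1.trans h2.symm)) hij
    all_goals omega
  · have h : i = q.1 := hadj
    simp only [extV, h]
    have := extA_le m n q.1
    omega
  · have h : p.1 = j := hadj
    simp only [extV, ← h]
    have := extA_le m n p.1
    omega
  · exact hadj.elim

lemma minimal_of_tight {V : Type*} (G : SimpleGraph V) (n : ℕ) (α : V → ℕ)
    (hmem : memSymbCover G n α)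
    (ht : ∀ u, ∃ v, G.Adj u v ∧ α u + α v = n) :
    isMinGenSymbCover G n α := by
  refine ⟨hmem, fun β hle hne hmemβ => ?_⟩
  have hex : ∃ u, β u < α u := by
    by_contra h
    push_neg at h
    exact hne (funext fun u => le_antisymm (hle u) (h u))
  obtain ⟨u, hu⟩ := hex
  obtain ⟨v, hadj, hsum⟩ := ht u
  have h1 := hmemβ u v hadj
  have h2 : β v ≤ α v := hle v
  omega

lemma tight_extV (m s n : ℕ) (hs : 2 ≤ s) :
    ∀ u, ∃ v, (coronaK m s).Adj u v ∧ extV m s n u + extV m s n v = n := by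
  rintro (i | ⟨i, t⟩)
  · refine ⟨Sum.inr (i, ⟨0, by omega⟩), rfl, ?_⟩
    simp only [extV]
    have := extA_le m n i
    omega
  · refine ⟨Sum.inl i, rfl, ?_⟩
    simp only [extV]
    have := extA_le m n i
    omega

lemma sum_if (m : ℕ) (hm : 0 < m) (x y : ℕ) :
    (∑ i : Fin m, if i.val = 0 then x else y) = x + (m - 1) * y := by
  haveI : NeZero m := ⟨by omega⟩
  rw [← Finset.add_sum_erase Finset.univ _ (Finset.mem_univ (0 : Fin m))]
  have h0 : (if (0 : Fin m).val = 0 then x else y) = x := if_pos rfl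
  rw [h0]
  congr 1
  rw [Finset.sum_congr rfl (fun i hi => ?_), Finset.sum_const,
    Finset.card_erase_of_mem (Finset.mem_univ _), Finset.card_univ, Fintype.card_fin,
    smul_eq_mul]
  have hne : i ≠ 0 := Finset.ne_of_mem_erase hi
  exact if_neg (fun h => hne (Fin.ext (h.trans (Fin.val_zero m).symm)))

lemma sum_pend (m s : ℕ) (f : Fin m → ℕ) :
    (∑ p : Fin m × Fin s, f p.1) = s * ∑ i, f i := by
  rw [Fintype.sum_prod_type, Finset.mul_sum]
  simp [Finset.sum_const, mul_comm]

lemma sum_extV (m s n : ℕ) (hm : 3 ≤ m) (hs : 2 ≤ s) :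
    ∑ u, extV m s n u = m * (s + 1) * (n / 2) + n % 2 * (m + s - 1) := by
  rw [Fintype.sum_sum_type]
  have h1 : (∑ i : Fin m, extV m s n (Sum.inl i)) = n / 2 + (m - 1) * (n - n / 2) := by
    rw [show (fun i => extV m s n (Sum.inl i)) = fun i : Fin m =>
      if i.val = 0 then n / 2 else n - n / 2 from rfl]
    exact sum_if m (by omega) _ _
  have h2 : (∑ p : Fin m × Fin s, extV m s n (Sum.inr p))
      = s * ((n - n / 2) + (m - 1) * (n / 2)) := by
    have : (∑ p : Fin m × Fin s, extV m s n (Sum.inr p))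
        = ∑ p : Fin m × Fin s, (if p.1.val = 0 then n - n / 2 else n / 2) := by
      refine Finset.sum_congr rfl fun p _ => ?_
      simp only [extV, extA]
      split_ifs <;> omega
    rw [this, sum_pend m s (fun i => if i.val = 0 then n - n / 2 else n / 2),
      sum_if m (by omega)]
  rw [h1, h2]
  obtain ⟨m', rfl⟩ : ∃ m', m = m' + 3 := ⟨m - 3, by omega⟩
  have e1 : m' + 3 - 1 = m' + 2 := by omega
  have e2 : m' + 3 + s - 1 = m' + 2 + s := by omega
  have e3 : n - n / 2 = n / 2 + n % 2 := by omega
  rw [e1, e2, e3]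
  have e4 : n % 2 ≤ 1 := by omega
  generalize n / 2 = q
  generalize n % 2 = e at e4 ⊢
  ring

set_option maxHeartbeats 1000000 in
lemma key_sum_le (m s n : ℕ) (hm : 3 ≤ m) (hs : 2 ≤ s)
    (α : (Fin m ⊕ Fin m × Fin s) → ℕ)
    (h : isMinGenSymbCover (coronaK m s) n α) :
    ∑ u, α u ≤ m * (s + 1) * (n / 2) + n % 2 * (m + s - 1) := by
  obtain ⟨hmem, hmin⟩ := h
  -- every vertex with positive exponent lies on a tight edge
  have key : ∀ w : Fin m ⊕ Fin m × Fin s, 0 < α w →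
      ∃ v, (coronaK m s).Adj w v ∧ α w + α v = n := by
    intro w hw
    classical
    set β : (Fin m ⊕ Fin m × Fin s) → ℕ := fun u => if u = w then α w - 1 else α u with hβ
    have hβw : β w = α w - 1 := if_pos rfl
    have hle : β ≤ α := by
      intro u
      simp only [hβ]
      split_ifs with hc
      · subst hc; omega
      · exact le_refl _
    have hne : β ≠ α := by
      intro hEq
      rw [hEq] at hβw
      omega
    have hnot := hmin β hle hne
    unfold memSymbCover at hnot
    push_neg at hnot
    obtain ⟨u, v, hadj, hlt⟩ := hnot
    by_cases hu : u = w
    · rw [hu] at hadj hlt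
      by_cases hv : v = w
      · rw [hv] at hadj
        exact absurd hadj ((coronaK m s).loopless.irrefl w)
      · have hβv : β v = α v := if_neg hv
        have h3 := hmem w v hadj
        exact ⟨v, hadj, by omega⟩
    · have hβu : β u = α u := if_neg hu
      by_cases hv : v = w
      · rw [hv] at hadj hlt
        have h3 := hmem u w hadj
        exact ⟨u, (coronaK m s).adj_symm hadj, by omega⟩
      · have hβv : β v = α v := if_neg hv
        have h3 := hmem u v hadj
        exfalso
        omega
  have hcore : ∀ i : Fin m, α (Sum.inl i) ≤ n := by
    intro i
    rcases Nat.eq_zero_or_pos (α (Sum.inl i)) with h0 | h0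
    · omega
    · obtain ⟨v, hadj, hsum⟩ := key _ h0
      omega
  have hpend : ∀ (i : Fin m) (t : Fin s), α (Sum.inr (i, t)) = n - α (Sum.inl i) := by
    intro i t
    have hge : n ≤ α (Sum.inl i) + α (Sum.inr (i, t)) := hmem _ _ rfl
    rcases Nat.eq_zero_or_pos (α (Sum.inr (i, t))) with h0 | h0
    · omega
    · obtain ⟨v, hadj, hsum⟩ := key _ h0
      rcases v with j | q
      · have hj : i = j := hadj
        subst hj
        omega
      · exact hadj.elim
  -- sums
  set S := ∑ i : Fin m, α (Sum.inl i) with hS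
  set T := ∑ i : Fin m, (n - α (Sum.inl i)) with hT
  have hTS : T + S = m * n := by
    rw [hT, hS, ← Finset.sum_add_distrib]
    rw [Finset.sum_congr rfl (fun i _ => by have := hcore i; omega : ∀ i ∈ Finset.univ,
      (n - α (Sum.inl i)) + α (Sum.inl i) = n)]
    simp [Finset.sum_const, mul_comm]
  have hsplit : ∑ u, α u = S + s * T := by
    rw [Fintype.sum_sum_type]
    congr 1
    have : (∑ p : Fin m × Fin s, α (Sum.inr p))
        = ∑ p : Fin m × Fin s, (n - α (Sum.inl p.1)) :=
      Finset.sum_congr rfl fun p _ => hpend p.1 p.2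
    rw [this, sum_pend m s (fun i => n - α (Sum.inl i))]
  -- lower bound on S
  obtain ⟨q, e, hn, he1, hq2, he2⟩ : ∃ q e, n = 2 * q + e ∧ e ≤ 1 ∧ n / 2 = q ∧ n % 2 = e :=
    ⟨n / 2, n % 2, by omega, by omega, rfl, rfl⟩
  rw [hq2, he2]
  obtain ⟨i0, -, hi0⟩ := Finset.exists_min_image (Finset.univ : Finset (Fin m))
    (fun i => α (Sum.inl i)) ⟨⟨0, by omega⟩, Finset.mem_univ _⟩
  set x := α (Sum.inl i0) with hx
  have hSsum : S = x + ∑ j ∈ Finset.univ.erase i0, α (Sum.inl j) :=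
    (Finset.add_sum_erase _ _ (Finset.mem_univ i0)).symm
  have hcard : (Finset.univ.erase i0).card = m - 1 := by
    rw [Finset.card_erase_of_mem (Finset.mem_univ _), Finset.card_univ, Fintype.card_fin]
  have hSlb : m * q + e * (m - 1) ≤ S := by
    by_cases hcase : n ≤ 2 * x
    · have hb : ∀ j ∈ Finset.univ.erase i0, x ≤ α (Sum.inl j) :=
        fun j _ => hi0 j (Finset.mem_univ j)
      have hsum : (m - 1) * x ≤ ∑ j ∈ Finset.univ.erase i0, α (Sum.inl j) := by
        have := Finset.card_nsmul_le_sum (Finset.univ.erase i0)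
          (fun j => α (Sum.inl j)) x hb
        rwa [hcard, smul_eq_mul] at this
      have hlow : x + (m - 1) * x ≤ S := by omega
      have hqe : q + e ≤ x := by omega
      zify [show 1 ≤ m by omega] at hlow ⊢
      have hm0 : (0:ℤ) ≤ (m:ℤ) := by positivity
      have hxqe : (0:ℤ) ≤ (x:ℤ) - (q:ℤ) - (e:ℤ) := by omega
      have he0 : (0:ℤ) ≤ (e:ℤ) := by positivity
      nlinarith [mul_nonneg hm0 hxqe]
    · push_neg at hcase
      have hb : ∀ j ∈ Finset.univ.erase i0, n - x ≤ α (Sum.inl j) := by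
        intro j hj
        have hne : j ≠ i0 := Finset.ne_of_mem_erase hj
        have := hmem (Sum.inl i0) (Sum.inl j) (fun hE => hne (by cases hE; rfl))
        omega
      have hsum : (m - 1) * (n - x) ≤ ∑ j ∈ Finset.univ.erase i0, α (Sum.inl j) := by
        have := Finset.card_nsmul_le_sum (Finset.univ.erase i0)
          (fun j => α (Sum.inl j)) (n - x) hb
        rwa [hcard, smul_eq_mul] at this
      have hlow : x + (m - 1) * (n - x) ≤ S := by omega
      have hxn : x ≤ n := by omega
      have hxq : x ≤ q := by omega
      zify [hxn, show 1 ≤ m by omega] at hlow ⊢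
      have hq1 : (0:ℤ) ≤ (m:ℤ) - 2 := by
        have : (3:ℤ) ≤ m := by exact_mod_cast hm
        linarith
      have hq2' : (0:ℤ) ≤ (q:ℤ) - (x:ℤ) := by omega
      have hnq : (n:ℤ) = 2 * (q:ℤ) + (e:ℤ) := by omega
      have he0 : (0:ℤ) ≤ (e:ℤ) := by positivity
      nlinarith [mul_nonneg hq1 hq2']
  have hSub : S ≤ m * n := by omega
  -- final computation
  rw [hsplit]
  zify [show 1 ≤ m + s by omega, show 1 ≤ m by omega] at hSlb hTS ⊢
  have hnq : (n:ℤ) = 2 * (q:ℤ) + (e:ℤ) := by omega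
  have hs1 : (0:ℤ) ≤ (s:ℤ) - 1 := by
    have : (2:ℤ) ≤ s := by exact_mod_cast hs
    linarith
  have hS2 : (0:ℤ) ≤ (S:ℤ) - ((m:ℤ) * (q:ℤ) + (e:ℤ) * ((m:ℤ) - 1)) := by linarith
  have hTs : (s:ℤ) * (T:ℤ) + (s:ℤ) * (S:ℤ) = (s:ℤ) * ((m:ℤ) * (n:ℤ)) := by
    rw [← hTS]; ring
  have hmn : (s:ℤ) * ((m:ℤ) * (n:ℤ)) = (s:ℤ) * (m:ℤ) * (2 * (q:ℤ) + (e:ℤ)) := by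
    rw [hnq]; ring
  nlinarith [mul_nonneg hs1 hS2, hTs, hmn]

lemma keyLemma (m s n : ℕ) (hm : 3 ≤ m) (hs : 2 ≤ s) :
    maxGenDegreeIs m s n (m * (s + 1) * (n / 2) + n % 2 * (m + s - 1)) := by
  constructor
  · exact ⟨extV m s n,
      minimal_of_tight _ _ _ (mem_extV m s n) (tight_extV m s n hs),
      (sum_extV m s n hm hs).symm⟩
  · rintro d ⟨α, hα, rfl⟩
    exact key_sum_le m s n hm hs α hα

end CoronaAux

/-- for `m ≥ 3`, `s ≥ 2` and `J = J(cr(K_m,s))`: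
`d(J⁽²ⁿ⁾) = m(s+1)n`, `d(J⁽²ⁿ⁺¹⁾) = m(s+1)n + m + s − 1` for all `n ≥ 0`;
consequently `d(J⁽ⁿ⁾) = (m+s−1)n + (m−2)(s−1)⌊n/2⌋` for all `n`, which is
not an eventually linear function of `n`. -/
theorem maxGenDegree_symbolic_powers_coronaK
    (m s : ℕ) (hm : 3 ≤ m) (hs : 2 ≤ s) :
    (∀ n : ℕ, maxGenDegreeIs m s (2 * n) (m * (s + 1) * n)) ∧
    (∀ n : ℕ, maxGenDegreeIs m s (2 * n + 1) (m * (s + 1) * n + m + s - 1)) ∧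
    (∀ n : ℕ, maxGenDegreeIs m s n ((m + s - 1) * n + (m - 2) * (s - 1) * (n / 2))) ∧
    ¬ ∃ (a b : ℚ) (N : ℕ), ∀ n : ℕ, N ≤ n →
        (((m + s - 1) * n + (m - 2) * (s - 1) * (n / 2) : ℕ) : ℚ) = a * n + b := by
  refine ⟨?_, ?_, ?_, ?_⟩
  · intro n
    have h := CoronaAux.keyLemma m s (2 * n) hm hs
    rw [show (2 * n) / 2 = n by omega, show (2 * n) % 2 = 0 by omega] at h
    simpa using h
  · intro n
    have h := CoronaAux.keyLemma m s (2 * n + 1) hm hs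
    rw [show (2 * n + 1) / 2 = n by omega, show (2 * n + 1) % 2 = 1 by omega] at h
    have he : m * (s + 1) * n + 1 * (m + s - 1) = m * (s + 1) * n + m + s - 1 := by
      set A := m * (s + 1) * n
      omega
    rwa [he] at h
  · intro n
    have h := CoronaAux.keyLemma m s n hm hs
    have he : (m + s - 1) * n + (m - 2) * (s - 1) * (n / 2)
        = m * (s + 1) * (n / 2) + n % 2 * (m + s - 1) := by
      obtain ⟨m', rfl⟩ : ∃ m', m = m' + 3 := ⟨m - 3, by omega⟩
      obtain ⟨s', rfl⟩ : ∃ s', s = s' + 2 := ⟨s - 2, by omega⟩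
      have e1 : m' + 3 + (s' + 2) - 1 = m' + s' + 4 := by omega
      have e2 : m' + 3 - 2 = m' + 1 := by omega
      have e3 : s' + 2 - 1 = s' + 1 := by omega
      rw [e1, e2, e3]
      have hdm : n = 2 * (n / 2) + n % 2 := (Nat.div_add_mod n 2).symm
      have e4 : n % 2 ≤ 1 := by omega
      nth_rewrite 1 [hdm]
      generalize n / 2 = q at *
      generalize n % 2 = e at *
      ring
    rw [he]
    exact h
  · rintro ⟨a, b, N, hlin⟩
    have h0 := hlin (2 * N) (by omega)
    have h1 := hlin (2 * N + 1) (by omega)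
    have h2 := hlin (2 * N + 2) (by omega)
    rw [show (2 * N) / 2 = N by omega] at h0
    rw [show (2 * N + 1) / 2 = N by omega] at h1
    rw [show (2 * N + 2) / 2 = N + 1 by omega] at h2
    obtain ⟨m', rfl⟩ : ∃ m', m = m' + 3 := ⟨m - 3, by omega⟩
    obtain ⟨s', rfl⟩ : ∃ s', s = s' + 2 := ⟨s - 2, by omega⟩
    rw [show m' + 3 + (s' + 2) - 1 = m' + s' + 4 by omega,
        show m' + 3 - 2 = m' + 1 by omega,
        show s' + 2 - 1 = s' + 1 by omega] at h0 h1 h2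
    push_cast at h0 h1 h2
    have hm' : (0:ℚ) ≤ (m' : ℚ) := Nat.cast_nonneg _
    have hs' : (0:ℚ) ≤ (s' : ℚ) := Nat.cast_nonneg _
    nlinarith [mul_nonneg hm' hs', h0, h1, h2]
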